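/- For every increasing function g ∈ ω^ω there is a gauge function f such that N^f = {A ⊆ 2^ω : ℋ^f(A) = 0} is contained in the Yorioka ideal I_g. -/

import Mathlib

open MeasureTheory Set
open scoped ENNReal

/-- The Cantor space `2^ω = ℕ → Bool` carries the metric
`d(x,y) = 2^{-min{n : x n ≠ y n}}` (and `d(x,x) = 0`). -/
noncomputable local instance cantorMetric : MetricSpace (ℕ → Bool) := PiNat.metricSpace

/-- A gauge function: a nondecreasing function `f : [0,∞) → [0,∞)` with `f 0 = 0` and
`lim_{x → 0⁺} f x = 0`. -/
structure IsGauge (f : ℝ → ℝ) : Prop where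
  nonneg : ∀ x : ℝ, 0 ≤ x → 0 ≤ f x
  zero : f 0 = 0
  mono : MonotoneOn f (Ici 0)
  tendsto_zero : Filter.Tendsto f (nhdsWithin 0 (Ioi 0)) (nhds 0)

/-- The value `f(diam)` of a gauge function `f` on an extended-real diameter
(infinite diameters are sent to `∞`). -/
noncomputable def gaugeFn (f : ℝ → ℝ) : ℝ≥0∞ → ℝ≥0∞ := fun d =>
  if d = ∞ then ∞ else ENNReal.ofReal (f d.toReal)

/-- The Hausdorff (outer) measure `ℋ^f` with gauge function `f`. -/
noncomputable def gaugeMeasure {X : Type*} [EMetricSpace X] (f : ℝ → ℝ) : OuterMeasure X :=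
  OuterMeasure.mkMetric (gaugeFn f)

/-- `s` is an initial segment of `x : 2^ω`. -/
def InitSeg (s : List Bool) (x : ℕ → Bool) : Prop :=
  ∀ i : ℕ, (hi : i < s.length) → s.get ⟨i, hi⟩ = x i

/-- `[σ]_∞` : the set of `x ∈ 2^ω` having `σ n` as an initial segment for infinitely
many `n`. -/
def limsupCyl (σ : ℕ → List Bool) : Set (ℕ → Bool) :=
  {x | ∃ᶠ n in Filter.atTop, InitSeg (σ n) x}

/-- The ideal `J_g = {A ⊆ 2^ω : ∃ σ, ht σ = g and A ⊆ [σ]_∞}`. -/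
def Jg (g : ℕ → ℕ) : Set (Set (ℕ → Bool)) :=
  {A | ∃ σ : ℕ → List Bool, (∀ n, (σ n).length = g n) ∧ A ⊆ limsupCyl σ}

/-- `f ≪ g` iff for every `k`, `f (n^k) ≤ g n` for all but finitely many `n`. -/
def FastBelow (f g : ℕ → ℕ) : Prop := ∀ k : ℕ, ∀ᶠ n in Filter.atTop, f (n ^ k) ≤ g n

/-- The Yorioka ideal `I_f = ⋃_{g ≫ f} J_g`. -/
def Yorioka (f : ℕ → ℕ) : Set (Set (ℕ → Bool)) :=
  {A | ∃ g : ℕ → ℕ, FastBelow f g ∧ A ∈ Jg g}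



namespace Stmt13Aux

variable (g : ℕ → ℕ)

/-- `TT g n = g (n^n)`. -/
def TT (n : ℕ) : ℕ := g (n ^ n)

/-- Thresholds. -/
def uu (ℓ : ℕ) : ℕ := TT g (2 ^ (2 * ℓ + 9))

/-- Level of a length `m`. -/
def lev (m : ℕ) : ℕ := Nat.findGreatest (fun j => uu g j ≤ m) m

/-- `mOf x` is the largest `m` with `x ≤ (1/2)^m`, for `0 < x ≤ 1`. -/
noncomputable def mOf (x : ℝ) : ℕ := Nat.log 2 ⌊1 / x⌋₊

/-- The gauge function. -/
noncomputable def fa (x : ℝ) : ℝ :=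
  if x ≤ 0 then 0 else (1 / 2 : ℝ) ^ (lev g (mOf x) + 1)

lemma pow_self_mono : Monotone (fun n : ℕ => n ^ n) := by
  intro m n h
  rcases Nat.eq_zero_or_pos m with rfl | hm
  · rcases Nat.eq_zero_or_pos n with rfl | hn
    · simp
    · simpa using Nat.one_le_pow n n hn
  · calc m ^ m ≤ n ^ m := Nat.pow_le_pow_left h m
      _ ≤ n ^ n := Nat.pow_le_pow_right (le_trans hm h) h

lemma TT_mono (hg : StrictMono g) : Monotone (TT g) := fun _ _ h =>
  hg.monotone (pow_self_mono h)

lemma self_le_TT (hg : StrictMono g) (n : ℕ) : n ≤ TT g n := by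
  calc n ≤ n ^ n := by
        rcases Nat.eq_zero_or_pos n with rfl | hn
        · simp
        · simpa using Nat.pow_le_pow_right hn hn
    _ ≤ g (n ^ n) := hg.le_apply

lemma uu_mono (hg : StrictMono g) : Monotone (uu g) := by
  intro a b h
  exact TT_mono g hg (Nat.pow_le_pow_right (by norm_num) (by omega))

lemma self_le_uu (hg : StrictMono g) (ℓ : ℕ) : ℓ ≤ uu g ℓ :=
  le_trans (le_trans (Nat.lt_two_pow_self (n := ℓ)).le
    (Nat.pow_le_pow_right (by norm_num) (by omega))) (self_le_TT g hg _)

lemma uu_lev_le {m : ℕ} (h : uu g 0 ≤ m) : uu g (lev g m) ≤ m :=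
  Nat.findGreatest_spec (P := fun j => uu g j ≤ m) (Nat.zero_le m) h

lemma le_lev (hg : StrictMono g) {ℓ m : ℕ} (h : uu g ℓ ≤ m) : ℓ ≤ lev g m :=
  Nat.le_findGreatest (le_trans (self_le_uu g hg ℓ) h) h

lemma lev_mono (hg : StrictMono g) : Monotone (lev g) := by
  intro a b hab
  rcases Nat.eq_zero_or_pos (lev g a) with h0 | hpos
  · simp [h0]
  · have hP : uu g (lev g a) ≤ a := by
      have := Nat.findGreatest_pos (P := fun j => uu g j ≤ a) (k := a)
      obtain ⟨n, hn0, hnk, hP⟩ := this.1 (by simpa [lev] using hpos)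
      exact Nat.findGreatest_spec (P := fun j => uu g j ≤ a) hnk hP
    exact le_lev g hg (le_trans hP hab)

lemma mOf_ge {x : ℝ} {m : ℕ} (hx : 0 < x) (h : x ≤ (1 / 2 : ℝ) ^ m) : m ≤ mOf x := by
  have h2 : (2 : ℝ) ^ m ≤ 1 / x := by
    rw [le_div_iff₀ hx]
    calc (2 : ℝ) ^ m * x ≤ (2 : ℝ) ^ m * ((1 / 2 : ℝ) ^ m) := by
          exact mul_le_mul_of_nonneg_left h (by positivity)
      _ = 1 := by
          rw [← mul_pow]; norm_num
  have hfloor : 2 ^ m ≤ ⌊1 / x⌋₊ := by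
    rw [Nat.le_floor_iff (by positivity)]
    push_cast
    exact h2
  have hne : ⌊1 / x⌋₊ ≠ 0 := by
    have : (1 : ℕ) ≤ 2 ^ m := Nat.one_le_two_pow
    omega
  exact (Nat.le_log_iff_pow_le (by norm_num) hne).2 hfloor

lemma le_pow_mOf {x : ℝ} (hx : 0 < x) (hx1 : x ≤ 1) : x ≤ (1 / 2 : ℝ) ^ mOf x := by
  have h1 : (1 : ℝ) ≤ 1 / x := (le_div_iff₀ hx).2 (by simpa using hx1)
  have hne : ⌊1 / x⌋₊ ≠ 0 := by
    have : (1 : ℕ) ≤ ⌊1 / x⌋₊ := Nat.le_floor (by simpa using h1)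
    omega
  have hlog : (2 : ℝ) ^ mOf x ≤ 1 / x := by
    have h2 : (2 : ℕ) ^ mOf x ≤ ⌊1 / x⌋₊ := Nat.pow_log_le_self 2 hne
    calc (2 : ℝ) ^ mOf x = ((2 ^ mOf x : ℕ) : ℝ) := by push_cast; ring
      _ ≤ (⌊1 / x⌋₊ : ℝ) := by exact_mod_cast h2
      _ ≤ 1 / x := Nat.floor_le (by positivity)
  have := (le_div_iff₀ hx).1 hlog
  calc x = (2 : ℝ) ^ mOf x * x * ((1 / 2 : ℝ) ^ mOf x) := by
        rw [mul_comm ((2:ℝ)^ mOf x) x, mul_assoc, ← mul_pow]; norm_num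
    _ ≤ 1 * ((1 / 2 : ℝ) ^ mOf x) := by
        exact mul_le_mul_of_nonneg_right this (by positivity)
    _ = (1 / 2 : ℝ) ^ mOf x := one_mul _

lemma mOf_anti {x y : ℝ} (hx : 0 < x) (hxy : x ≤ y) : mOf y ≤ mOf x := by
  unfold mOf
  exact Nat.log_mono_right (Nat.floor_le_floor
    (div_le_div_of_nonneg_left zero_le_one hx hxy))

lemma fa_nonneg (x : ℝ) : 0 ≤ fa g x := by
  unfold fa; split <;> positivity

lemma fa_zero : fa g 0 = 0 := by simp [fa]

lemma fa_mono (hg : StrictMono g) : MonotoneOn (fa g) (Ici 0) := by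
  rintro x hx y hy hxy
  rcases eq_or_lt_of_le (mem_Ici.1 hx) with h0 | h0
  · rw [← h0, fa_zero]; exact fa_nonneg g y
  · have hy0 : 0 < y := lt_of_lt_of_le h0 hxy
    rw [fa, fa, if_neg (not_le.2 h0), if_neg (not_le.2 hy0)]
    apply pow_le_pow_of_le_one (by norm_num) (by norm_num)
    have := lev_mono g hg (mOf_anti h0 hxy)
    omega

lemma fa_le (hg : StrictMono g) {ℓ : ℕ} {x : ℝ} (hx : 0 < x) (h : x ≤ (1 / 2 : ℝ) ^ uu g ℓ) :
    fa g x ≤ (1 / 2 : ℝ) ^ (ℓ + 1) := by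
  rw [fa, if_neg (not_le.2 hx)]
  apply pow_le_pow_of_le_one (by norm_num) (by norm_num)
  have h1 : uu g ℓ ≤ mOf x := mOf_ge hx h
  have := le_lev g hg h1
  omega

lemma fa_tendsto (hg : StrictMono g) :
    Filter.Tendsto (fa g) (nhdsWithin 0 (Ioi 0)) (nhds 0) := by
  rw [Metric.tendsto_nhdsWithin_nhds]
  intro ε hε
  obtain ⟨ℓ, hℓ⟩ : ∃ ℓ : ℕ, (1 / 2 : ℝ) ^ (ℓ + 1) < ε := by
    obtain ⟨n, hn⟩ := exists_pow_lt_of_lt_one hε (by norm_num : (1/2 : ℝ) < 1)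
    exact ⟨n, lt_of_le_of_lt (pow_le_pow_of_le_one (by norm_num) (by norm_num) (by omega)) hn⟩
  refine ⟨(1 / 2 : ℝ) ^ uu g ℓ, by positivity, ?_⟩
  intro x hx hd
  rw [Real.dist_eq, sub_zero] at hd ⊢
  have hx0 : 0 < x := hx
  rw [abs_of_pos hx0] at hd
  rw [abs_of_nonneg (fa_nonneg g x)]
  exact lt_of_le_of_lt (fa_le g hg hx0 hd.le) hℓ

lemma isGauge_fa (hg : StrictMono g) : IsGauge (fa g) where
  nonneg := fun x _ => fa_nonneg g x
  zero := fa_zero g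
  mono := fa_mono g hg
  tendsto_zero := fa_tendsto g hg

end Stmt13Aux

namespace Stmt13Aux

/-! ### Cantor space lemmas -/

lemma cantor_dist_eq (x y : ℕ → Bool) :
    dist x y = @dist _ PiNat.dist x y := rfl

lemma cantor_apply_eq {x y : ℕ → Bool} {m : ℕ} (h : dist x y ≤ (1 / 2 : ℝ) ^ m)
    {j : ℕ} (hj : j < m) : x j = y j := by
  rcases eq_or_ne x y with rfl | hne
  · rfl
  · rw [cantor_dist_eq, PiNat.dist_eq_of_ne hne] at h
    have hm : m ≤ PiNat.firstDiff x y := by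
      by_contra hc
      push_neg at hc
      have := pow_lt_pow_right_of_lt_one₀ (by norm_num : (0:ℝ) < 1/2)
        (by norm_num : (1/2 : ℝ) < 1) hc
      linarith
    exact PiNat.apply_eq_of_lt_firstDiff (lt_of_lt_of_le hj hm)

lemma ofReal_half_pow (n : ℕ) :
    ENNReal.ofReal ((1 / 2 : ℝ) ^ n) = (2⁻¹ : ℝ≥0∞) ^ n := by
  rw [ENNReal.ofReal_pow (by norm_num)]
  congr 1
  rw [one_div, ENNReal.ofReal_inv_of_pos (by norm_num)]
  norm_num

lemma toReal_half_pow (n : ℕ) :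
    ((2⁻¹ : ℝ≥0∞) ^ n).toReal = (1 / 2 : ℝ) ^ n := by
  rw [ENNReal.toReal_pow, ENNReal.toReal_inv]
  norm_num

lemma half_pow_ne_top (n : ℕ) : (2⁻¹ : ℝ≥0∞) ^ n ≠ ∞ := by
  apply ENNReal.pow_ne_top
  simp

/-! ### The construction -/

variable (g : ℕ → ℕ) (t : ℕ → ℕ → Set (ℕ → Bool))

open scoped Classical in
/-- A chosen point of `t k i`. -/
noncomputable def xpt (k i : ℕ) : ℕ → Bool :=
  if h : (t k i).Nonempty then h.some else fun _ => false

/-- The length of the string associated to `t k i`. -/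
noncomputable def mki (k i : ℕ) : ℕ :=
  if EMetric.diam (t k i) = 0 then TT g (2 * Nat.pair k i + 1)
  else mOf (EMetric.diam (t k i)).toReal

/-- The string associated to `t k i`. -/
noncomputable def str (k i : ℕ) : List Bool :=
  List.ofFn (fun j : Fin (mki g t k i) => xpt t k i j)

/-- The level of `t k i`. -/
noncomputable def lv (k i : ℕ) : ℕ := lev g (mki g t k i)

/-- The rank of `i` among indices of the same level in cover `k`. -/
noncomputable def rnk (k i : ℕ) : ℕ :=
  {i' | i' < i ∧ EMetric.diam (t k i') ≠ 0 ∧ lv g t k i' = lv g t k i}.ncard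

/-- The position assigned to `t k i`. -/
noncomputable def pos (k i : ℕ) : ℕ :=
  if EMetric.diam (t k i) = 0 then 2 * Nat.pair k i + 1
  else 2 * Nat.pair k (2 ^ (lv g t k i + 3) + rnk g t k i)

open scoped Classical in
/-- The final sequence of strings. -/
noncomputable def sig : ℕ → List Bool := fun n =>
  if h : ∃ p : ℕ × ℕ, pos g t p.1 p.2 = n then str g t h.choose.1 h.choose.2
  else List.replicate (TT g n) true

lemma length_str (k i : ℕ) : (str g t k i).length = mki g t k i := by
  simp [str]

lemma diam_le_mki (hdiam : ∀ k i, (t k i).Nonempty →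
      EMetric.diam (t k i) ≤ (2⁻¹ : ℝ≥0∞) ^ uu g k) (k i : ℕ) :
    EMetric.diam (t k i) ≤ (2⁻¹ : ℝ≥0∞) ^ mki g t k i := by
  rcases eq_or_ne (EMetric.diam (t k i)) 0 with h0 | h0
  · simp [h0]
  · have hne : (t k i).Nonempty := by
      rcases Set.eq_empty_or_nonempty (t k i) with he | h
      · rw [he] at h0; exact absurd EMetric.diam_empty h0
      · exact h
    have hle := hdiam k i hne
    have htop : EMetric.diam (t k i) ≠ ∞ := ne_top_of_le_ne_top (half_pow_ne_top _) hle
    have hpos : 0 < (EMetric.diam (t k i)).toReal := ENNReal.toReal_pos h0 htop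
    have h1 : (EMetric.diam (t k i)).toReal ≤ (1 / 2 : ℝ) ^ uu g k := by
      calc (EMetric.diam (t k i)).toReal ≤ ((2⁻¹ : ℝ≥0∞) ^ uu g k).toReal :=
            ENNReal.toReal_mono (half_pow_ne_top _) hle
        _ = (1 / 2 : ℝ) ^ uu g k := toReal_half_pow _
    have hle1 : (EMetric.diam (t k i)).toReal ≤ 1 :=
      le_trans h1 (pow_le_one₀ (by norm_num) (by norm_num))
    rw [mki, if_neg h0]
    calc EMetric.diam (t k i)
        = ENNReal.ofReal (EMetric.diam (t k i)).toReal := (ENNReal.ofReal_toReal htop).symm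
      _ ≤ ENNReal.ofReal ((1 / 2 : ℝ) ^ mOf (EMetric.diam (t k i)).toReal) :=
          ENNReal.ofReal_le_ofReal (le_pow_mOf hpos hle1)
      _ = (2⁻¹ : ℝ≥0∞) ^ mOf (EMetric.diam (t k i)).toReal := ofReal_half_pow _

lemma initSeg_str (hdiam : ∀ k i, (t k i).Nonempty →
      EMetric.diam (t k i) ≤ (2⁻¹ : ℝ≥0∞) ^ uu g k) (k i : ℕ)
    {y : ℕ → Bool} (hy : y ∈ t k i) : InitSeg (str g t k i) y := by
  have hne : (t k i).Nonempty := ⟨y, hy⟩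
  have hx : xpt t k i ∈ t k i := by
    classical
    rw [xpt]
    rw [dif_pos hne]
    exact hne.some_mem
  have hed : edist y (xpt t k i) ≤ (2⁻¹ : ℝ≥0∞) ^ mki g t k i :=
    le_trans (EMetric.edist_le_diam_of_mem hy hx) (diam_le_mki g t hdiam k i)
  have hdist : dist y (xpt t k i) ≤ (1 / 2 : ℝ) ^ mki g t k i := by
    rw [edist_dist, ← ofReal_half_pow] at hed
    exact (ENNReal.ofReal_le_ofReal_iff (by positivity)).1 hed
  intro j hj
  rw [length_str] at hj
  have : y j = xpt t k i j := cantor_apply_eq hdist hj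
  simp [str, this]

end Stmt13Aux

namespace Stmt13Aux

variable (g : ℕ → ℕ) (t : ℕ → ℕ → Set (ℕ → Bool))

lemma uuk_le_mki (hdiam : ∀ k i, (t k i).Nonempty →
      EMetric.diam (t k i) ≤ (2⁻¹ : ℝ≥0∞) ^ uu g k) {k i : ℕ}
    (h0 : EMetric.diam (t k i) ≠ 0) : uu g k ≤ mki g t k i := by
  have hne : (t k i).Nonempty := by
    rcases Set.eq_empty_or_nonempty (t k i) with he | h
    · rw [he] at h0; exact absurd EMetric.diam_empty h0
    · exact h
  have hle := hdiam k i hne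
  have htop : EMetric.diam (t k i) ≠ ∞ := ne_top_of_le_ne_top (half_pow_ne_top _) hle
  have hpos : 0 < (EMetric.diam (t k i)).toReal := ENNReal.toReal_pos h0 htop
  have h1 : (EMetric.diam (t k i)).toReal ≤ (1 / 2 : ℝ) ^ uu g k := by
    calc (EMetric.diam (t k i)).toReal ≤ ((2⁻¹ : ℝ≥0∞) ^ uu g k).toReal :=
          ENNReal.toReal_mono (half_pow_ne_top _) hle
      _ = (1 / 2 : ℝ) ^ uu g k := toReal_half_pow _
  rw [mki, if_neg h0]
  exact mOf_ge hpos h1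

lemma k_le_lv (hg : StrictMono g) (hdiam : ∀ k i, (t k i).Nonempty →
      EMetric.diam (t k i) ≤ (2⁻¹ : ℝ≥0∞) ^ uu g k) {k i : ℕ}
    (h0 : EMetric.diam (t k i) ≠ 0) : k ≤ lv g t k i :=
  le_lev g hg (uuk_le_mki g t hdiam h0)

lemma uu_lv_le_mki (hg : StrictMono g) (hdiam : ∀ k i, (t k i).Nonempty →
      EMetric.diam (t k i) ≤ (2⁻¹ : ℝ≥0∞) ^ uu g k) {k i : ℕ}
    (h0 : EMetric.diam (t k i) ≠ 0) : uu g (lv g t k i) ≤ mki g t k i :=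
  uu_lev_le g (le_trans (uu_mono g hg (Nat.zero_le k)) (uuk_le_mki g t hdiam h0))

lemma term_eq (hdiam : ∀ k i, (t k i).Nonempty →
      EMetric.diam (t k i) ≤ (2⁻¹ : ℝ≥0∞) ^ uu g k) {k i : ℕ}
    (h0 : EMetric.diam (t k i) ≠ 0) :
    (⨆ _ : (t k i).Nonempty, gaugeFn (fa g) (EMetric.diam (t k i)))
      = (2⁻¹ : ℝ≥0∞) ^ (lv g t k i + 1) := by
  have hne : (t k i).Nonempty := by
    rcases Set.eq_empty_or_nonempty (t k i) with he | h
    · rw [he] at h0; exact absurd EMetric.diam_empty h0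
    · exact h
  have hle := hdiam k i hne
  have htop : EMetric.diam (t k i) ≠ ∞ := ne_top_of_le_ne_top (half_pow_ne_top _) hle
  have hpos : 0 < (EMetric.diam (t k i)).toReal := ENNReal.toReal_pos h0 htop
  rw [iSup_pos hne]
  simp only [gaugeFn, if_neg htop]
  have hfa : fa g (EMetric.diam (t k i)).toReal = (1 / 2 : ℝ) ^ (lv g t k i + 1) := by
    rw [fa, if_neg (not_le.2 hpos)]
    congr 2
    rw [lv, mki, if_neg h0]
  rw [hfa, ofReal_half_pow]

/-- The set of indices of positive-diameter sets at level `ℓ` in cover `k`. -/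
def cls (k ℓ : ℕ) : Set ℕ := {i | EMetric.diam (t k i) ≠ 0 ∧ lv g t k i = ℓ}

lemma finset_card_le (hdiam : ∀ k i, (t k i).Nonempty →
      EMetric.diam (t k i) ≤ (2⁻¹ : ℝ≥0∞) ^ uu g k)
    (hsum : ∀ k, ∑' i, ⨆ _ : (t k i).Nonempty, gaugeFn (fa g) (EMetric.diam (t k i)) ≤ 1)
    (k ℓ : ℕ) (S : Finset ℕ) (hS : ∀ i ∈ S, i ∈ cls g t k ℓ) :
    S.card ≤ 2 ^ (ℓ + 1) := by
  have hterm : ∀ i ∈ S, (⨆ _ : (t k i).Nonempty, gaugeFn (fa g) (EMetric.diam (t k i)))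
      = (2⁻¹ : ℝ≥0∞) ^ (ℓ + 1) := by
    intro i hi
    obtain ⟨h0, hl⟩ := hS i hi
    rw [term_eq g t hdiam h0, hl]
  have hsum1 : (S.card : ℝ≥0∞) * (2⁻¹) ^ (ℓ + 1) ≤ 1 := by
    calc (S.card : ℝ≥0∞) * (2⁻¹) ^ (ℓ + 1)
        = ∑ _i ∈ S, (2⁻¹ : ℝ≥0∞) ^ (ℓ + 1) := by
          rw [Finset.sum_const, nsmul_eq_mul]
      _ = ∑ i ∈ S, ⨆ _ : (t k i).Nonempty, gaugeFn (fa g) (EMetric.diam (t k i)) :=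
          (Finset.sum_congr rfl hterm).symm
      _ ≤ ∑' i, ⨆ _ : (t k i).Nonempty, gaugeFn (fa g) (EMetric.diam (t k i)) :=
          ENNReal.sum_le_tsum S
      _ ≤ 1 := hsum k
  have hcast : (S.card : ℝ≥0∞) ≤ 2 ^ (ℓ + 1) := by
    calc (S.card : ℝ≥0∞) = (S.card : ℝ≥0∞) * ((2⁻¹) ^ (ℓ + 1) * 2 ^ (ℓ + 1)) := by
          rw [← mul_pow]
          rw [ENNReal.inv_mul_cancel (by norm_num) (by norm_num)]
          simp
      _ = ((S.card : ℝ≥0∞) * (2⁻¹) ^ (ℓ + 1)) * 2 ^ (ℓ + 1) := by ring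
      _ ≤ 1 * 2 ^ (ℓ + 1) := mul_le_mul_left hsum1 _
      _ = 2 ^ (ℓ + 1) := one_mul _
  have h2 : ((2 : ℝ≥0∞) ^ (ℓ + 1)) = ((2 ^ (ℓ + 1) : ℕ) : ℝ≥0∞) := by
    push_cast
    ring
  rw [h2] at hcast
  exact_mod_cast hcast

lemma cls_finite (hdiam : ∀ k i, (t k i).Nonempty →
      EMetric.diam (t k i) ≤ (2⁻¹ : ℝ≥0∞) ^ uu g k)
    (hsum : ∀ k, ∑' i, ⨆ _ : (t k i).Nonempty, gaugeFn (fa g) (EMetric.diam (t k i)) ≤ 1)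
    (k ℓ : ℕ) : (cls g t k ℓ).Finite := by
  by_contra hinf
  rw [← Set.not_infinite, not_not] at hinf
  obtain ⟨S, hS, hcard⟩ := hinf.exists_subset_card_eq (2 ^ (ℓ + 1) + 1)
  have := finset_card_le g t hdiam hsum k ℓ S (fun i hi => hS hi)
  omega

lemma cls_ncard (hdiam : ∀ k i, (t k i).Nonempty →
      EMetric.diam (t k i) ≤ (2⁻¹ : ℝ≥0∞) ^ uu g k)
    (hsum : ∀ k, ∑' i, ⨆ _ : (t k i).Nonempty, gaugeFn (fa g) (EMetric.diam (t k i)) ≤ 1)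
    (k ℓ : ℕ) : (cls g t k ℓ).ncard ≤ 2 ^ (ℓ + 1) := by
  have hfin := cls_finite g t hdiam hsum k ℓ
  rw [Set.ncard_eq_toFinset_card _ hfin]
  exact finset_card_le g t hdiam hsum k ℓ _ (fun i hi => (Set.Finite.mem_toFinset hfin).1 hi)

lemma rnkset_subset {k i ℓ : ℕ} (hl : lv g t k i = ℓ) :
    {i' | i' < i ∧ EMetric.diam (t k i') ≠ 0 ∧ lv g t k i' = lv g t k i} ⊆ cls g t k ℓ := by
  intro j hj
  exact ⟨hj.2.1, hl ▸ hj.2.2⟩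

lemma rnk_add_one_le (hdiam : ∀ k i, (t k i).Nonempty →
      EMetric.diam (t k i) ≤ (2⁻¹ : ℝ≥0∞) ^ uu g k)
    (hsum : ∀ k, ∑' i, ⨆ _ : (t k i).Nonempty, gaugeFn (fa g) (EMetric.diam (t k i)) ≤ 1)
    {k i : ℕ} (h0 : EMetric.diam (t k i) ≠ 0) :
    rnk g t k i + 1 ≤ 2 ^ (lv g t k i + 1) := by
  set ℓ := lv g t k i with hℓ
  have hsub := rnkset_subset g t (k := k) (i := i) hℓ.symm
  have hfin := cls_finite g t hdiam hsum k ℓ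
  have hfin' := hfin.subset hsub
  have hins : insert i {i' | i' < i ∧ EMetric.diam (t k i') ≠ 0 ∧ lv g t k i' = lv g t k i}
      ⊆ cls g t k ℓ := by
    rw [Set.insert_subset_iff]
    exact ⟨⟨h0, hℓ.symm⟩, hsub⟩
  have hnotmem : i ∉ {i' | i' < i ∧ EMetric.diam (t k i') ≠ 0 ∧ lv g t k i' = lv g t k i} := by
    simp
  calc rnk g t k i + 1
      = (insert i {i' | i' < i ∧ EMetric.diam (t k i') ≠ 0 ∧ lv g t k i' = lv g t k i}).ncard := by
        rw [Set.ncard_insert_of_notMem hnotmem hfin']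
        rfl
    _ ≤ (cls g t k ℓ).ncard := Set.ncard_le_ncard hins hfin
    _ ≤ 2 ^ (ℓ + 1) := cls_ncard g t hdiam hsum k ℓ

lemma rnk_strictmono (hdiam : ∀ k i, (t k i).Nonempty →
      EMetric.diam (t k i) ≤ (2⁻¹ : ℝ≥0∞) ^ uu g k)
    (hsum : ∀ k, ∑' i, ⨆ _ : (t k i).Nonempty, gaugeFn (fa g) (EMetric.diam (t k i)) ≤ 1)
    {k i i' : ℕ} (hii : i < i') (h0 : EMetric.diam (t k i) ≠ 0)
    (h0' : EMetric.diam (t k i') ≠ 0) (hll : lv g t k i = lv g t k i') :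
    rnk g t k i < rnk g t k i' := by
  set ℓ := lv g t k i with hℓ
  have hfin := cls_finite g t hdiam hsum k ℓ
  have hsub' : {j | j < i' ∧ EMetric.diam (t k j) ≠ 0 ∧ lv g t k j = lv g t k i'}
      ⊆ cls g t k ℓ := rnkset_subset g t hll.symm
  have hins : insert i {j | j < i ∧ EMetric.diam (t k j) ≠ 0 ∧ lv g t k j = lv g t k i}
      ⊆ {j | j < i' ∧ EMetric.diam (t k j) ≠ 0 ∧ lv g t k j = lv g t k i'} := by
    rw [Set.insert_subset_iff]
    constructor
    · exact ⟨hii, h0, hll⟩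
    · intro j hj
      exact ⟨lt_trans hj.1 hii, hj.2.1, hll ▸ hj.2.2⟩
  have hfin1 := hfin.subset (rnkset_subset g t (k := k) (i := i) hℓ.symm)
  have hnotmem : i ∉ {j | j < i ∧ EMetric.diam (t k j) ≠ 0 ∧ lv g t k j = lv g t k i} := by simp
  have : rnk g t k i + 1 ≤ rnk g t k i' := by
    calc rnk g t k i + 1
        = (insert i {j | j < i ∧ EMetric.diam (t k j) ≠ 0 ∧ lv g t k j = lv g t k i}).ncard := by
          rw [Set.ncard_insert_of_notMem hnotmem hfin1]
          rfl
      _ ≤ _ := Set.ncard_le_ncard hins (hfin.subset hsub')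
  omega

end Stmt13Aux

namespace Stmt13Aux

variable (g : ℕ → ℕ) (t : ℕ → ℕ → Set (ℕ → Bool))

lemma b_bounds (hdiam : ∀ k i, (t k i).Nonempty →
      EMetric.diam (t k i) ≤ (2⁻¹ : ℝ≥0∞) ^ uu g k)
    (hsum : ∀ k, ∑' i, ⨆ _ : (t k i).Nonempty, gaugeFn (fa g) (EMetric.diam (t k i)) ≤ 1)
    {k i : ℕ} (h0 : EMetric.diam (t k i) ≠ 0) :
    2 ^ (lv g t k i + 3) ≤ 2 ^ (lv g t k i + 3) + rnk g t k i ∧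
      2 ^ (lv g t k i + 3) + rnk g t k i < 2 ^ (lv g t k i + 4) := by
  have h1 := rnk_add_one_le g t hdiam hsum h0
  have h2 : (2:ℕ) ^ (lv g t k i + 1) ≤ 2 ^ (lv g t k i + 3) :=
    Nat.pow_le_pow_right (by norm_num) (by omega)
  have h3 : (2:ℕ) ^ (lv g t k i + 4) = 2 ^ (lv g t k i + 3) + 2 ^ (lv g t k i + 3) := by
    rw [pow_succ]
    ring
  omega

lemma TT_pos_le (hg : StrictMono g)
    (hdiam : ∀ k i, (t k i).Nonempty →
      EMetric.diam (t k i) ≤ (2⁻¹ : ℝ≥0∞) ^ uu g k)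
    (hsum : ∀ k, ∑' i, ⨆ _ : (t k i).Nonempty, gaugeFn (fa g) (EMetric.diam (t k i)) ≤ 1)
    (k i : ℕ) : TT g (pos g t k i) ≤ mki g t k i := by
  rcases eq_or_ne (EMetric.diam (t k i)) 0 with h0 | h0
  · rw [pos, if_pos h0, mki, if_pos h0]
  · rw [pos, if_neg h0]
    obtain ⟨hb1, hb2⟩ := b_bounds g t hdiam hsum h0
    have hk : k ≤ lv g t k i := k_le_lv g t hg hdiam h0
    have hkl : k < 2 ^ (lv g t k i + 4) :=
      lt_of_le_of_lt hk (lt_of_lt_of_le (Nat.lt_two_pow_self (n := lv g t k i))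
        (Nat.pow_le_pow_right (by norm_num) (by omega)))
    have hmax : max k (2 ^ (lv g t k i + 3) + rnk g t k i) + 1 ≤ 2 ^ (lv g t k i + 4) := by
      rcases max_cases k (2 ^ (lv g t k i + 3) + rnk g t k i) with ⟨hm, _⟩ | ⟨hm, _⟩ <;> omega
    have hpair : Nat.pair k (2 ^ (lv g t k i + 3) + rnk g t k i) < 2 ^ (2 * lv g t k i + 8) := by
      calc Nat.pair k (2 ^ (lv g t k i + 3) + rnk g t k i)
          < (max k (2 ^ (lv g t k i + 3) + rnk g t k i) + 1) ^ 2 :=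
            Nat.pair_lt_max_add_one_sq _ _
        _ ≤ (2 ^ (lv g t k i + 4)) ^ 2 := Nat.pow_le_pow_left hmax 2
        _ = 2 ^ (2 * lv g t k i + 8) := by
            rw [← pow_mul]
            ring_nf
    have hpos : 2 * Nat.pair k (2 ^ (lv g t k i + 3) + rnk g t k i) ≤ 2 ^ (2 * lv g t k i + 9) := by
      have : (2:ℕ) ^ (2 * lv g t k i + 9) = 2 * 2 ^ (2 * lv g t k i + 8) := by
        rw [pow_succ]
        ring
      omega
    calc TT g (2 * Nat.pair k (2 ^ (lv g t k i + 3) + rnk g t k i))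
        ≤ TT g (2 ^ (2 * lv g t k i + 9)) := TT_mono g hg hpos
      _ = uu g (lv g t k i) := rfl
      _ ≤ mki g t k i := uu_lv_le_mki g t hg hdiam h0

lemma pos_inj (hdiam : ∀ k i, (t k i).Nonempty →
      EMetric.diam (t k i) ≤ (2⁻¹ : ℝ≥0∞) ^ uu g k)
    (hsum : ∀ k, ∑' i, ⨆ _ : (t k i).Nonempty, gaugeFn (fa g) (EMetric.diam (t k i)) ≤ 1)
    {k i k' i' : ℕ} (h : pos g t k i = pos g t k' i') : k = k' ∧ i = i' := by
  rcases eq_or_ne (EMetric.diam (t k i)) 0 with h0 | h0 <;>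
    rcases eq_or_ne (EMetric.diam (t k' i')) 0 with h0' | h0'
  · rw [pos, if_pos h0, pos, if_pos h0'] at h
    have : Nat.pair k i = Nat.pair k' i' := by omega
    exact Nat.pair_eq_pair.1 this
  · rw [pos, if_pos h0, pos, if_neg h0'] at h
    omega
  · rw [pos, if_neg h0, pos, if_pos h0'] at h
    omega
  · rw [pos, if_neg h0, pos, if_neg h0'] at h
    have hpair : Nat.pair k (2 ^ (lv g t k i + 3) + rnk g t k i)
        = Nat.pair k' (2 ^ (lv g t k' i' + 3) + rnk g t k' i') := by omega
    obtain ⟨hkk, hbb⟩ := Nat.pair_eq_pair.1 hpair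
    subst hkk
    obtain ⟨hb1, hb2⟩ := b_bounds g t hdiam hsum h0
    obtain ⟨hb1', hb2'⟩ := b_bounds g t hdiam hsum h0'
    have hll : lv g t k i = lv g t k i' := by
      by_contra hne
      rcases Nat.lt_or_ge (lv g t k i) (lv g t k i') with hlt | hge
      · have : (2:ℕ) ^ (lv g t k i + 4) ≤ 2 ^ (lv g t k i' + 3) :=
          Nat.pow_le_pow_right (by norm_num) (by omega)
        omega
      · have hlt : lv g t k i' < lv g t k i := by omega
        have : (2:ℕ) ^ (lv g t k i' + 4) ≤ 2 ^ (lv g t k i + 3) :=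
          Nat.pow_le_pow_right (by norm_num) (by omega)
        omega
    have hrr : rnk g t k i = rnk g t k i' := by
      rw [hll] at hbb
      omega
    refine ⟨rfl, ?_⟩
    by_contra hne
    rcases Nat.lt_or_ge i i' with hlt | hge
    · have := rnk_strictmono g t hdiam hsum hlt h0 h0' hll
      omega
    · have hlt : i' < i := by omega
      have := rnk_strictmono g t hdiam hsum hlt h0' h0 hll.symm
      omega

lemma TT_le_sig_length (hg : StrictMono g)
    (hdiam : ∀ k i, (t k i).Nonempty →
      EMetric.diam (t k i) ≤ (2⁻¹ : ℝ≥0∞) ^ uu g k)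
    (hsum : ∀ k, ∑' i, ⨆ _ : (t k i).Nonempty, gaugeFn (fa g) (EMetric.diam (t k i)) ≤ 1)
    (n : ℕ) : TT g n ≤ (sig g t n).length := by
  rw [sig]
  split
  · next h =>
    rw [length_str]
    have hspec := h.choose_spec
    calc TT g n = TT g (pos g t h.choose.1 h.choose.2) := by rw [hspec]
      _ ≤ _ := TT_pos_le g t hg hdiam hsum _ _
  · simp

lemma sig_at_pos (hdiam : ∀ k i, (t k i).Nonempty →
      EMetric.diam (t k i) ≤ (2⁻¹ : ℝ≥0∞) ^ uu g k)
    (hsum : ∀ k, ∑' i, ⨆ _ : (t k i).Nonempty, gaugeFn (fa g) (EMetric.diam (t k i)) ≤ 1)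
    (k i : ℕ) : sig g t (pos g t k i) = str g t k i := by
  rw [sig]
  have hex : ∃ p : ℕ × ℕ, pos g t p.1 p.2 = pos g t k i := ⟨(k, i), rfl⟩
  rw [dif_pos hex]
  obtain ⟨hk, hi⟩ := pos_inj g t hdiam hsum hex.choose_spec
  rw [hk, hi]

end Stmt13Aux

/-- For every increasing `g ∈ ω^ω` there is a gauge function `f`
such that `N^f = {A ⊆ 2^ω : ℋ^f(A) = 0}` is contained in the Yorioka ideal `I_g`. -/
theorem stmt13 (g : ℕ → ℕ) (hg : StrictMono g) :
    ∃ f : ℝ → ℝ, IsGauge f ∧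
      {A : Set (ℕ → Bool) | gaugeMeasure f A = 0} ⊆ Yorioka g := by
  classical
  refine ⟨Stmt13Aux.fa g, Stmt13Aux.isGauge_fa g hg, ?_⟩
  intro A hA
  simp only [Set.mem_setOf_eq] at hA
  have hpre : ∀ k : ℕ, ∃ t : ℕ → Set (ℕ → Bool), (A ⊆ ⋃ n, t n) ∧
      (∀ i, (t i).Nonempty → EMetric.diam (t i) ≤ (2⁻¹ : ℝ≥0∞) ^ Stmt13Aux.uu g k) ∧
      (∑' i, ⨆ _ : (t i).Nonempty, gaugeFn (Stmt13Aux.fa g) (EMetric.diam (t i)) ≤ 1) := by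
    intro k
    have hr0 : (0 : ℝ≥0∞) < (2⁻¹) ^ Stmt13Aux.uu g k :=
      ENNReal.pow_pos (by simp) _
    have hpre0 : OuterMeasure.mkMetric'.pre
        (fun s : Set (ℕ → Bool) => gaugeFn (Stmt13Aux.fa g) (EMetric.diam s))
        ((2⁻¹) ^ Stmt13Aux.uu g k) A = 0 := by
      have h1 : gaugeMeasure (Stmt13Aux.fa g) A
          = ⨆ (r' : ℝ≥0∞) (_ : 0 < r'), OuterMeasure.mkMetric'.pre
            (fun s : Set (ℕ → Bool) => gaugeFn (Stmt13Aux.fa g) (EMetric.diam s)) r' A := by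
        rw [gaugeMeasure, OuterMeasure.mkMetric, OuterMeasure.mkMetric']
        rw [OuterMeasure.iSup_apply]
        refine iSup_congr fun r' => ?_
        rw [OuterMeasure.iSup_apply]
        rfl
      have h2 : OuterMeasure.mkMetric'.pre
          (fun s : Set (ℕ → Bool) => gaugeFn (Stmt13Aux.fa g) (EMetric.diam s))
          ((2⁻¹) ^ Stmt13Aux.uu g k) A ≤ 0 := by
        rw [← hA, h1]
        exact le_iSup₂ (f := fun (r' : ℝ≥0∞) (_ : 0 < r') => OuterMeasure.mkMetric'.pre
          (fun s : Set (ℕ → Bool) => gaugeFn (Stmt13Aux.fa g) (EMetric.diam s)) r' A)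
          ((2⁻¹) ^ Stmt13Aux.uu g k) hr0
      exact le_antisymm h2 zero_le
    rw [OuterMeasure.mkMetric'.pre, OuterMeasure.boundedBy_apply] at hpre0
    have hlt : (⨅ (t : ℕ → Set (ℕ → Bool)) (_ : A ⊆ iUnion t),
        ∑' n, ⨆ _ : (t n).Nonempty, MeasureTheory.extend
          (fun s (_ : EMetric.diam s ≤ (2⁻¹) ^ Stmt13Aux.uu g k) =>
            gaugeFn (Stmt13Aux.fa g) (EMetric.diam s)) (t n)) < 1 := by
      refine lt_of_eq_of_lt hpre0 ?_
      norm_num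
    obtain ⟨t, ht⟩ := iInf_lt_iff.1 hlt
    obtain ⟨hcov, hsum⟩ := iInf_lt_iff.1 ht
    have hdiam : ∀ i, (t i).Nonempty →
        EMetric.diam (t i) ≤ (2⁻¹ : ℝ≥0∞) ^ Stmt13Aux.uu g k := by
      intro i hne
      by_contra hgt
      have hterm : MeasureTheory.extend
          (fun s (_ : EMetric.diam s ≤ (2⁻¹) ^ Stmt13Aux.uu g k) =>
            gaugeFn (Stmt13Aux.fa g) (EMetric.diam s)) (t i) = ∞ :=
        MeasureTheory.extend_eq_top _ hgt
      have hsup : (⨆ _ : (t i).Nonempty, MeasureTheory.extend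
          (fun s (_ : EMetric.diam s ≤ (2⁻¹) ^ Stmt13Aux.uu g k) =>
            gaugeFn (Stmt13Aux.fa g) (EMetric.diam s)) (t i)) = ∞ := by
        rw [iSup_pos hne, hterm]
      have hle := ENNReal.le_tsum (f := fun n => ⨆ _ : (t n).Nonempty, MeasureTheory.extend
          (fun s (_ : EMetric.diam s ≤ (2⁻¹) ^ Stmt13Aux.uu g k) =>
            gaugeFn (Stmt13Aux.fa g) (EMetric.diam s)) (t n)) i
      rw [hsup] at hle
      have := lt_of_le_of_lt hle hsum
      simp at this
    refine ⟨t, hcov, hdiam, ?_⟩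
    refine le_trans (ENNReal.tsum_le_tsum fun i => ?_) hsum.le
    refine iSup_mono fun _ => ?_
    rcases le_or_gt (EMetric.diam (t i)) ((2⁻¹) ^ Stmt13Aux.uu g k) with hle | hgt
    · rw [MeasureTheory.extend_eq
        (fun s (_ : EMetric.diam s ≤ (2⁻¹ : ℝ≥0∞) ^ Stmt13Aux.uu g k) =>
          gaugeFn (Stmt13Aux.fa g) (EMetric.diam s)) hle]
    · rw [MeasureTheory.extend_eq_top
        (fun s (_ : EMetric.diam s ≤ (2⁻¹ : ℝ≥0∞) ^ Stmt13Aux.uu g k) =>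
          gaugeFn (Stmt13Aux.fa g) (EMetric.diam s)) (not_le.2 hgt)]
      exact le_top
  choose t hcov hdiam hsum using hpre
  refine ⟨fun n => (Stmt13Aux.sig g t n).length, ?_, Stmt13Aux.sig g t, fun n => rfl, ?_⟩
  · intro k
    filter_upwards [Filter.eventually_ge_atTop (max k 1)] with n hn
    have h1 : g (n ^ k) ≤ g (n ^ n) :=
      hg.monotone (Nat.pow_le_pow_right (le_trans (le_max_right k 1) hn)
        (le_trans (le_max_left k 1) hn))
    exact le_trans h1 (Stmt13Aux.TT_le_sig_length g t hg hdiam hsum n)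
  · intro x hx
    have hik : ∀ k, ∃ i, x ∈ t k i := fun k => Set.mem_iUnion.1 (hcov k hx)
    choose ik hik using hik
    rw [limsupCyl, Set.mem_setOf_eq, Filter.frequently_atTop]
    intro N
    have hexists : ∃ k, N ≤ Stmt13Aux.pos g t k (ik k) := by
      by_contra hcon
      push_neg at hcon
      have hinj : Function.Injective
          (fun k => (⟨Stmt13Aux.pos g t k (ik k), hcon k⟩ : Fin N)) := by
        intro a b hab
        simp only [Fin.mk.injEq] at hab
        exact (Stmt13Aux.pos_inj g t hdiam hsum hab).1
      obtain ⟨a, b, hne, heq⟩ := Finite.exists_ne_map_eq_of_infinite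
        (fun k => (⟨Stmt13Aux.pos g t k (ik k), hcon k⟩ : Fin N))
      exact hne (hinj heq)
    obtain ⟨k, hk⟩ := hexists
    refine ⟨Stmt13Aux.pos g t k (ik k), hk, ?_⟩
    rw [Stmt13Aux.sig_at_pos g t hdiam hsum]
    exact Stmt13Aux.initSeg_str g t hdiam k (ik k) (hik k)
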